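/- Let z, w ∈ ℂ with |w| ≥ 1. Then max(2|Re(z)|, 2|Re(z·w)|) ≥ |z| · |w|^{-1} · |Im(w)|. -/

import Mathlib

theorem stmt_13 (z w : ℂ) (hw : 1 ≤ ‖w‖) :
    ‖z‖ * ‖w‖⁻¹ * |w.im| ≤
      max (2 * |z.re|) (2 * |(z * w).re|) := by
  have hW : 0 < ‖w‖ := lt_of_lt_of_le one_pos hw
  rcases eq_or_ne z 0 with rfl | hz
  · simp
  have ha : 0 < ‖z‖ := norm_pos_iff.mpr hz
  have key : ‖z‖ ^ 2 * |w.im| ≤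
      |z.re| * (‖z‖ * ‖w‖) + ‖z‖ * |(z * w).re| := by
    have h1 : ‖z‖ ^ 2 * w.im = z.re * (z * w).im - z.im * (z * w).re := by
      rw [Complex.sq_norm]
      simp [Complex.mul_im, Complex.mul_re, Complex.normSq_apply]
      ring
    calc ‖z‖ ^ 2 * |w.im| = |‖z‖ ^ 2 * w.im| := by
          rw [abs_mul, abs_of_nonneg (pow_nonneg (norm_nonneg z) 2)]
      _ = |z.re * (z * w).im - z.im * (z * w).re| := by rw [h1]
      _ ≤ |z.re * (z * w).im| + |z.im * (z * w).re| := abs_sub _ _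
      _ ≤ |z.re| * (‖z‖ * ‖w‖) + ‖z‖ * |(z * w).re| := by
          rw [abs_mul, abs_mul]
          gcongr
          · exact (Complex.abs_im_le_norm _).trans_eq (norm_mul _ _)
          · exact Complex.abs_im_le_norm z
  have step1 : ‖z‖ * ‖w‖⁻¹ * |w.im| ≤ |z.re| + |(z * w).re| := by
    rw [show ‖z‖ * ‖w‖⁻¹ * |w.im|
        = ‖z‖ * |w.im| / ‖w‖ by ring, div_le_iff₀ hW]
    have h2 : ‖z‖ * |(z * w).re| ≤ ‖z‖ * ‖w‖ * |(z * w).re| :=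
      mul_le_mul_of_nonneg_right (le_mul_of_one_le_right ha.le hw) (abs_nonneg (z * w).re)
    nlinarith [key, h2, ha, abs_nonneg w.im, abs_nonneg (z * w).re, abs_nonneg z.re]
  refine step1.trans ?_
  rcases le_total |z.re| |(z * w).re| with h | h
  · exact le_max_of_le_right (by linarith)
  · exact le_max_of_le_left (by linarith)
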